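/- Let (Γ, Γ₊, 1) be the partially ordered abelian group of Δ-valued functions arising from (P, μ, Δ) as described. Then (Γ, Γ₊, 1) is a Riesz group with order unit 1: Γ₊ generates Γ, 1 is an order unit, and Γ satisfies Riesz interpolation (if ρ₁, ρ₂ ≤ σ₁, σ₂ then there exists η with ρ₁, ρ₂ ≤ η ≤ σ₁, σ₂). -/

import Mathlib

open Set MeasureTheory

/-- Membership in the group `Γ` of Definition D:G: `η : P → ℝ` is locally constant
(i.e. continuous into the discrete group `Δ`), takes values in `Δ`, and differs from
some constant `r ∈ Δ` by a compactly supported function of integral zero. -/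
def MemGamma {P : Type*} [TopologicalSpace P] [MeasurableSpace P]
    (μ : Measure P) (Δ : AddSubgroup ℝ) (η : P → ℝ) : Prop :=
  IsLocallyConstant η ∧ (∀ x, η x ∈ Δ) ∧
    ∃ r ∈ Δ, HasCompactSupport (fun x => η x - r) ∧ (∫ x, (η x - r) ∂μ) = 0

section Aux

variable {P : Type*} [TopologicalSpace P] [MeasurableSpace P] [OpensMeasurableSpace P] [T2Space P]

set_option linter.unusedSectionVars false in
lemma aux_finite_image {f : P → ℝ} (hf : IsLocallyConstant f) {K : Set P} (hK : IsCompact K) :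
    (f '' K).Finite := by
  obtain ⟨b', hb'sub, hb'fin, hcov⟩ := hK.elim_finite_subcover_image
    (b := (univ : Set ℝ)) (c := fun a => f ⁻¹' {a})
    (fun a _ => hf _) (fun x _ => mem_iUnion₂.2 ⟨f x, mem_univ _, rfl⟩)
  refine hb'fin.subset ?_
  rintro a ⟨x, hx, rfl⟩
  obtain ⟨b, hb, hxb⟩ := mem_iUnion₂.1 (hcov hx)
  exact hxb ▸ hb

lemma aux_integral_mem {μ : Measure P} [IsFiniteMeasureOnCompacts μ] (Δ : AddSubgroup ℝ)
    (hΔmul : ∀ r ∈ Δ, ∀ K : Set P, IsCompact K → IsOpen K → (μ K).toReal * r ∈ Δ)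
    {f : P → ℝ} (hf : IsLocallyConstant f) (hc : HasCompactSupport f)
    (hmem : ∀ x, f x ∈ Δ) : (∫ x, f x ∂μ) ∈ Δ := by
  classical
  have hfin : (f '' tsupport f).Finite := aux_finite_image hf hc
  set S : Finset ℝ := hfin.toFinset.erase 0 with hS
  have hfiber_open : ∀ a : ℝ, IsOpen (f ⁻¹' {a}) := fun a => hf _
  have hfiber_closed : ∀ a : ℝ, IsClosed (f ⁻¹' {a}) := fun a =>
    ⟨by simpa using hf ({a}ᶜ)⟩
  have hfiber_compact : ∀ a ∈ S, IsCompact (f ⁻¹' {a}) := by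
    intro a ha
    have ha0 : a ≠ 0 := (Finset.mem_erase.1 ha).1
    refine hc.of_isClosed_subset (hfiber_closed a) ?_
    intro x hx
    have hxa : f x = a := hx
    refine subset_tsupport f ?_
    simp only [Function.mem_support, hxa]
    exact ha0
  have hrepr : f = fun x => ∑ a ∈ S, (f ⁻¹' {a}).indicator (fun _ => a) x := by
    funext x
    by_cases h0 : f x = 0
    · rw [Finset.sum_eq_zero, h0]
      intro a ha
      have : x ∉ f ⁻¹' {a} := by
        simp only [mem_preimage, mem_singleton_iff, h0]
        exact fun h => (Finset.mem_erase.1 ha).1 h.symm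
      simp [indicator_of_notMem this]
    · have hxS : f x ∈ S := by
        refine Finset.mem_erase.2 ⟨h0, hfin.mem_toFinset.2 ⟨x, subset_tsupport f h0, rfl⟩⟩
      rw [Finset.sum_eq_single_of_mem (f x) hxS]
      · simp [indicator_of_mem (show x ∈ f ⁻¹' {f x} from rfl)]
      · intro a _ hne
        have : x ∉ f ⁻¹' {a} := fun h => hne h.out.symm
        simp [indicator_of_notMem this]
  have hint : ∀ a ∈ S, Integrable ((f ⁻¹' {a}).indicator (fun _ => a)) μ := by
    intro a ha
    exact (integrable_indicator_iff (hfiber_open a).measurableSet).2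
      (integrableOn_const (hfiber_compact a ha).measure_lt_top.ne)
  have hval : (∫ x, f x ∂μ) = ∑ a ∈ S, (μ (f ⁻¹' {a})).toReal * a := by
    conv_lhs => rw [hrepr]
    rw [integral_finset_sum S hint]
    exact Finset.sum_congr rfl fun a ha => by
      rw [integral_indicator_const a (hfiber_open a).measurableSet, smul_eq_mul]; rfl
  rw [hval]
  refine AddSubgroup.sum_mem Δ ?_
  intro a ha
  have haΔ : a ∈ Δ := by
    obtain ⟨-, haim⟩ := Finset.mem_erase.1 ha
    obtain ⟨x, -, rfl⟩ := hfin.mem_toFinset.1 haim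
    exact hmem x
  exact hΔmul a haΔ _ (hfiber_compact a ha) (hfiber_open a)

end Aux

/-- `(Γ, Γ₊, 1)` is a Riesz group with order unit `1`: the constant function `1`
belongs to `Γ`, `Γ` is a group, `Γ₊` generates `Γ`, `1` is an order unit, and
Riesz interpolation holds. -/
theorem gamma_is_riesz_group
    {P : Type*} [TopologicalSpace P] [T2Space P] [LocallyCompactSpace P]
    [SecondCountableTopology P] [TotallyDisconnectedSpace P] [NoncompactSpace P]
    [MeasurableSpace P] [BorelSpace P]
    (μ : Measure P)
    (hμpos : ∀ U : Set P, IsOpen U → U.Nonempty → 0 < μ U)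
    (hμfin : ∀ K : Set P, IsCompact K → μ K ≠ ⊤)
    (L : ℕ → Set P) (hLmono : Monotone L)
    (hL : ∀ n, IsCompact (L n) ∧ IsOpen (L n) ∧ (L n).Nonempty)
    (hLunion : (⋃ n, L n) = Set.univ)
    (Δ : AddSubgroup ℝ) (hΔctble : Countable Δ) (hΔone : (1 : ℝ) ∈ Δ)
    (hΔmul : ∀ r ∈ Δ, ∀ K : Set P, IsCompact K → IsOpen K → (μ K).toReal * r ∈ Δ)
    (hΔdiv : ∀ r ∈ Δ, ∀ n : ℕ, ((μ (L n)).toReal)⁻¹ * r ∈ Δ) :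
    -- the order unit `1` lies in `Γ`
    MemGamma μ Δ (fun _ => (1 : ℝ)) ∧
    -- `Γ` is a group
    ((MemGamma μ Δ (0 : P → ℝ)) ∧
      ∀ η₁ η₂ : P → ℝ, MemGamma μ Δ η₁ → MemGamma μ Δ η₂ → MemGamma μ Δ (η₁ - η₂)) ∧
    -- `Γ₊` generates `Γ`
    (∀ η : P → ℝ, MemGamma μ Δ η → ∃ η₁ η₂ : P → ℝ,
      MemGamma μ Δ η₁ ∧ MemGamma μ Δ η₂ ∧
      (∀ x, 0 ≤ η₁ x) ∧ (∀ x, 0 ≤ η₂ x) ∧ η = η₁ - η₂) ∧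
    -- `1` is an order unit
    (∀ η : P → ℝ, MemGamma μ Δ η → ∃ N : ℕ, ∀ x, η x ≤ N) ∧
    -- Riesz interpolation
    (∀ ρ₁ ρ₂ σ₁ σ₂ : P → ℝ, MemGamma μ Δ ρ₁ → MemGamma μ Δ ρ₂ →
      MemGamma μ Δ σ₁ → MemGamma μ Δ σ₂ →
      (∀ x, ρ₁ x ≤ σ₁ x) → (∀ x, ρ₁ x ≤ σ₂ x) →
      (∀ x, ρ₂ x ≤ σ₁ x) → (∀ x, ρ₂ x ≤ σ₂ x) →
      ∃ η : P → ℝ, MemGamma μ Δ η ∧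
        (∀ x, ρ₁ x ≤ η x) ∧ (∀ x, ρ₂ x ≤ η x) ∧
        (∀ x, η x ≤ σ₁ x) ∧ (∀ x, η x ≤ σ₂ x)) := by
  classical
  haveI : IsFiniteMeasureOnCompacts μ := ⟨fun {K} hK => lt_top_iff_ne_top.mpr (hμfin K hK)⟩
  -- basic facts
  have hconst : ∀ c : ℝ, c ∈ Δ → MemGamma μ Δ (fun _ => c) := by
    intro c hc
    refine ⟨IsLocallyConstant.const c, fun _ => hc, c, hc, ?_, by simp⟩
    simp only [sub_self]
    exact HasCompactSupport.zero
  have hintegrable : ∀ f : P → ℝ, IsLocallyConstant f → HasCompactSupport f →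
      Integrable f μ := fun f hf hc => hf.continuous.integrable_of_hasCompactSupport hc
  have hnat : ∀ n : ℕ, (n : ℝ) ∈ Δ := by
    intro n
    have := AddSubgroup.nsmul_mem Δ hΔone n
    simpa [nsmul_eq_mul] using this
  -- upper bound
  have lcsub : ∀ (f : P → ℝ) (a : ℝ), IsLocallyConstant f →
      IsLocallyConstant (fun x => f x - a) := fun f a hf => hf.comp (· - a)
  have hbdd : ∀ η : P → ℝ, MemGamma μ Δ η → ∃ C : ℝ, ∀ x, η x ≤ C := by
    rintro η ⟨hlc, -, r, -, hcs, -⟩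
    obtain ⟨C, hC⟩ := ((lcsub η r hlc).continuous).bounded_above_of_compact_support hcs
    refine ⟨C + r, fun x => ?_⟩
    have h1 : |η x - r| ≤ C := by simpa [Real.norm_eq_abs] using hC x
    have h2 := (abs_le.1 h1).2
    linarith
  -- subtraction closure
  have hsubclosed : ∀ η₁ η₂ : P → ℝ, MemGamma μ Δ η₁ → MemGamma μ Δ η₂ →
      MemGamma μ Δ (η₁ - η₂) := by
    rintro η₁ η₂ ⟨hlc₁, hmem₁, r₁, hr₁, hcs₁, hint₁⟩ ⟨hlc₂, hmem₂, r₂, hr₂, hcs₂, hint₂⟩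
    refine ⟨hlc₁.comp₂ hlc₂ (· - ·), fun x => sub_mem (hmem₁ x) (hmem₂ x),
      r₁ - r₂, sub_mem hr₁ hr₂, ?_, ?_⟩
    · have heq : (fun x => (η₁ - η₂) x - (r₁ - r₂))
          = fun x => (η₁ x - r₁) - (η₂ x - r₂) := by
        funext x; simp [Pi.sub_apply]; ring
      rw [heq]
      exact hcs₁.comp₂_left hcs₂ (sub_zero 0)
    · have heq : (fun x => (η₁ - η₂) x - (r₁ - r₂))
          = fun x => (η₁ x - r₁) - (η₂ x - r₂) := by
        funext x; simp [Pi.sub_apply]; ring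
      rw [heq]
      rw [integral_sub (hintegrable (fun x => η₁ x - r₁) (lcsub η₁ r₁ hlc₁) hcs₁)
        (hintegrable (fun x => η₂ x - r₂) (lcsub η₂ r₂ hlc₂) hcs₂), hint₁, hint₂, sub_zero]
  refine ⟨hconst 1 hΔone, ⟨?_, hsubclosed⟩, ?_, ?_, ?_⟩
  · -- 0 ∈ Γ
    have := hconst 0 (AddSubgroup.zero_mem Δ)
    simpa [show (fun _ : P => (0:ℝ)) = (0 : P → ℝ) from rfl] using this
  · -- positive generation
    rintro η hη
    obtain ⟨C, hC⟩ := hbdd _ (hsubclosed 0 η (by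
      have := hconst 0 (AddSubgroup.zero_mem Δ)
      simpa [show (fun _ : P => (0:ℝ)) = (0 : P → ℝ) from rfl] using this) hη)
    set n : ℕ := ⌈C⌉₊ with hn
    have hlow : ∀ x, -η x ≤ n := fun x => le_trans (by simpa using hC x) (Nat.le_ceil C)
    refine ⟨fun x => η x + n, fun _ => (n : ℝ), ?_, hconst _ (hnat n), ?_, ?_, ?_⟩
    · obtain ⟨hlc, hmem, r, hr, hcs, hint⟩ := hη
      refine ⟨(by exact hlc.comp (· + (n:ℝ)) : IsLocallyConstant (fun x => η x + n)), fun x => add_mem (hmem x) (hnat n),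
        r + n, add_mem hr (hnat n), ?_, ?_⟩
      · have heq : (fun x => (η x + n) - (r + n)) = fun x => η x - r := by
          funext x; ring
        rw [heq]; exact hcs
      · have heq : (fun x => (η x + n) - (r + n)) = fun x => η x - r := by
          funext x; ring
        rw [heq]; exact hint
    · intro x
      show (0:ℝ) ≤ η x + n
      have := hlow x; linarith
    · intro x; positivity
    · funext x; simp [Pi.sub_apply]
  · -- order unit
    rintro η hη
    obtain ⟨C, hC⟩ := hbdd _ hη
    exact ⟨⌈C⌉₊, fun x => (hC x).trans (Nat.le_ceil C)⟩
  · -- Riesz interpolation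
    rintro ρ₁ ρ₂ σ₁ σ₂ hρ₁ hρ₂ hσ₁ hσ₂ h11 h12 h21 h22
    obtain ⟨lcρ₁, memρ₁, r₁, hr₁Δ, hcsρ₁, hintρ₁⟩ := hρ₁
    obtain ⟨lcρ₂, memρ₂, r₂, hr₂Δ, hcsρ₂, hintρ₂⟩ := hρ₂
    obtain ⟨lcσ₁, memσ₁, s₁, hs₁Δ, hcsσ₁, hintσ₁⟩ := hσ₁
    obtain ⟨lcσ₂, memσ₂, s₂, hs₂Δ, hcsσ₂, hintσ₂⟩ := hσ₂
    set τ : P → ℝ := fun x => max (ρ₁ x) (ρ₂ x) with hτ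
    set σm : P → ℝ := fun x => min (σ₁ x) (σ₂ x) with hσm
    set r : ℝ := max r₁ r₂ with hr
    set s : ℝ := min s₁ s₂ with hs
    have lcτ : IsLocallyConstant τ := lcρ₁.comp₂ lcρ₂ max
    have lcσm : IsLocallyConstant σm := lcσ₁.comp₂ lcσ₂ min
    have hrΔ : r ∈ Δ := by rcases max_choice r₁ r₂ with h | h <;> rw [hr, h] <;> assumption
    have hsΔ : s ∈ Δ := by rcases min_choice s₁ s₂ with h | h <;> rw [hs, h] <;> assumption
    have hτΔ : ∀ x, τ x ∈ Δ := fun x => by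
      rcases max_choice (ρ₁ x) (ρ₂ x) with h | h <;> rw [hτ] <;> simp only [h] <;>
        [exact memρ₁ x; exact memρ₂ x]
    have hτσ : ∀ x, τ x ≤ σm x := fun x =>
      max_le (le_min (h11 x) (h12 x)) (le_min (h21 x) (h22 x))
    -- compact supports
    have hcsτ : HasCompactSupport (fun x => τ x - r) := by
      refine IsCompact.of_isClosed_subset (hcsρ₁.union hcsρ₂) isClosed_closure
        (closure_minimal ?_ ((isClosed_tsupport _).union (isClosed_tsupport _)))
      intro x hx
      by_contra h
      rw [mem_union] at h
      obtain ⟨h1, h2⟩ := not_or.1 h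
      have e1 : ρ₁ x - r₁ = 0 := image_eq_zero_of_notMem_tsupport (f := fun x => ρ₁ x - r₁) h1
      have e2 : ρ₂ x - r₂ = 0 := image_eq_zero_of_notMem_tsupport (f := fun x => ρ₂ x - r₂) h2
      have : τ x - r = 0 := by
        simp only [hτ, hr]
        have : ρ₁ x = r₁ := by linarith
        have : ρ₂ x = r₂ := by linarith
        simp_all
      exact hx this
    have hcsσm : HasCompactSupport (fun x => σm x - s) := by
      refine IsCompact.of_isClosed_subset (hcsσ₁.union hcsσ₂) isClosed_closure
        (closure_minimal ?_ ((isClosed_tsupport _).union (isClosed_tsupport _)))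
      intro x hx
      by_contra h
      rw [mem_union] at h
      obtain ⟨h1, h2⟩ := not_or.1 h
      have e1 : σ₁ x - s₁ = 0 := image_eq_zero_of_notMem_tsupport (f := fun x => σ₁ x - s₁) h1
      have e2 : σ₂ x - s₂ = 0 := image_eq_zero_of_notMem_tsupport (f := fun x => σ₂ x - s₂) h2
      have : σm x - s = 0 := by
        simp only [hσm, hs]
        have : σ₁ x = s₁ := by linarith
        have : σ₂ x = s₂ := by linarith
        simp_all
      exact hx this
    -- choose n
    have hsub : ∀ K : Set P, IsCompact K → ∃ n, K ⊆ L n := by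
      intro K hK
      obtain ⟨T, hT⟩ := hK.elim_finite_subcover L (fun n => (hL n).2.1)
        (by rw [hLunion]; exact subset_univ K)
      exact ⟨T.sup id, hT.trans (iUnion₂_subset fun i hi => hLmono (Finset.le_sup (f := id) hi))⟩
    obtain ⟨n, hn⟩ := hsub _ (hcsτ.union hcsσm)
    have hτout : ∀ x, x ∉ L n → τ x = r := by
      intro x hx
      have : τ x - r = 0 := image_eq_zero_of_notMem_tsupport
        (f := fun x => τ x - r) (fun h => hx (hn (Or.inl h)))
      linarith
    have hσout : ∀ x, x ∉ L n → σm x = s := by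
      intro x hx
      have : σm x - s = 0 := image_eq_zero_of_notMem_tsupport
        (f := fun x => σm x - s) (fun h => hx (hn (Or.inr h)))
      linarith
    -- integrals
    have lcτr : IsLocallyConstant (fun x => τ x - r) := lcsub τ r lcτ
    have lcσms : IsLocallyConstant (fun x => σm x - s) := lcsub σm s lcσm
    have intτ : Integrable (fun x => τ x - r) μ := hintegrable _ lcτr hcsτ
    have intσm : Integrable (fun x => σm x - s) μ := hintegrable _ lcσms hcsσm
    set c : ℝ := ∫ x, (τ x - r) ∂μ with hc
    have hc0 : 0 ≤ c := by
      rcases max_choice r₁ r₂ with h | h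
      · calc (0:ℝ) = ∫ x, (ρ₁ x - r₁) ∂μ := hintρ₁.symm
          _ ≤ c := integral_mono (hintegrable (fun x => ρ₁ x - r₁) (lcsub ρ₁ r₁ lcρ₁) hcsρ₁) intτ
              (fun x => by simp only [hτ, hr, h]; exact sub_le_sub (le_max_left _ _) le_rfl)
      · calc (0:ℝ) = ∫ x, (ρ₂ x - r₂) ∂μ := hintρ₂.symm
          _ ≤ c := integral_mono (hintegrable (fun x => ρ₂ x - r₂) (lcsub ρ₂ r₂ lcρ₂) hcsρ₂) intτ
              (fun x => by simp only [hτ, hr, h]; exact sub_le_sub (le_max_right _ _) le_rfl)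
    have hcΔ : c ∈ Δ := aux_integral_mem Δ hΔmul lcτr hcsτ (fun x => sub_mem (hτΔ x) hrΔ)
    have hdneg : (∫ x, (σm x - s) ∂μ) ≤ 0 := by
      rcases min_choice s₁ s₂ with h | h
      · calc (∫ x, (σm x - s) ∂μ)
            ≤ ∫ x, (σ₁ x - s₁) ∂μ := integral_mono intσm
              (hintegrable (fun x => σ₁ x - s₁) (lcsub σ₁ s₁ lcσ₁) hcsσ₁)
              (fun x => by simp only [hσm, hs, h]; exact sub_le_sub (min_le_left _ _) le_rfl)
          _ = 0 := hintσ₁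
      · calc (∫ x, (σm x - s) ∂μ)
            ≤ ∫ x, (σ₂ x - s₂) ∂μ := integral_mono intσm
              (hintegrable (fun x => σ₂ x - s₂) (lcsub σ₂ s₂ lcσ₂) hcsσ₂)
              (fun x => by simp only [hσm, hs, h]; exact sub_le_sub (min_le_right _ _) le_rfl)
          _ = 0 := hintσ₂
    set μn : ℝ := (μ (L n)).toReal with hμn
    have hμnpos : 0 < μn := ENNReal.toReal_pos
      (hμpos _ (hL n).2.1 (hL n).2.2).ne' (hμfin _ (hL n).1)
    have hLmeas : MeasurableSet (L n) := (hL n).2.1.measurableSet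
    have hindint : ∀ b : ℝ, Integrable ((L n).indicator (fun _ => b)) μ :=
      fun b => (integrable_indicator_iff hLmeas).2
        (integrableOn_const (hL n).1.measure_lt_top.ne)
    have hkey : c ≤ (s - r) * μn := by
      have hple : ∀ x, τ x - r ≤ (σm x - s) + (L n).indicator (fun _ => s - r) x := by
        intro x
        by_cases hx : x ∈ L n
        · rw [indicator_of_mem hx]
          have := hτσ x; linarith
        · rw [indicator_of_notMem hx, hτout x hx, hσout x hx]; simp
      calc c ≤ ∫ x, ((σm x - s) + (L n).indicator (fun _ => s - r) x) ∂μ :=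
            integral_mono intτ (intσm.add (hindint _)) hple
        _ = (∫ x, (σm x - s) ∂μ) + (s - r) * μn := by
            rw [integral_add intσm (hindint _), integral_indicator_const _ hLmeas,
              smul_eq_mul, mul_comm]; rfl
        _ ≤ (s - r) * μn := by linarith
    set t : ℝ := r + μn⁻¹ * c with ht
    have htΔ : t ∈ Δ := AddSubgroup.add_mem Δ hrΔ (hΔdiv c hcΔ n)
    have hrt : r ≤ t := le_add_of_nonneg_right (mul_nonneg (inv_nonneg.2 hμnpos.le) hc0)
    have hts : t ≤ s := by
      have h1 : μn⁻¹ * c ≤ s - r := by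
        rw [inv_mul_le_iff₀ hμnpos, mul_comm]
        exact hkey
      simp only [ht]; linarith
    set η : P → ℝ := fun x => if x ∈ L n then τ x else t with hη
    have hηout : ∀ x, x ∉ L n → η x = t := fun x hx => by simp [hη, hx]
    have hηin : ∀ x, x ∈ L n → η x = τ x := fun x hx => by simp [hη, hx]
    have lcη : IsLocallyConstant η := by
      intro U
      have hpre : η ⁻¹' U = (τ ⁻¹' U ∩ L n) ∪ ((L n)ᶜ ∩ (if t ∈ U then univ else ∅)) := by
        ext x
        by_cases hx : x ∈ L n <;> split_ifs with hU <;>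
          simp [hη, hx, hU, mem_preimage]
      rw [hpre]
      refine ((lcτ U).inter (hL n).2.1).union (((hL n).1.isClosed.isOpen_compl).inter ?_)
      split_ifs <;> simp [isOpen_univ, isOpen_empty]
    refine ⟨η, ⟨lcη, ?_, t, htΔ, ?_, ?_⟩, ?_, ?_, ?_, ?_⟩
    · intro x
      by_cases hx : x ∈ L n
      · rw [hηin x hx]; exact hτΔ x
      · rw [hηout x hx]; exact htΔ
    · -- compact support of η - t
      refine IsCompact.of_isClosed_subset (hL n).1 isClosed_closure
        (closure_minimal ?_ (hL n).1.isClosed)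
      intro x hx
      by_contra hxL
      apply hx
      show η x - t = 0
      rw [hηout x hxL]; ring
    · -- integral zero
      have heq : (fun x => η x - t)
          = fun x => (τ x - r) - (L n).indicator (fun _ => t - r) x := by
        funext x
        by_cases hx : x ∈ L n
        · rw [hηin x hx, indicator_of_mem hx]; ring
        · rw [hηout x hx, indicator_of_notMem hx, hτout x hx]; ring
      rw [heq, integral_sub intτ (hindint _), integral_indicator_const _ hLmeas,
        smul_eq_mul]
      have hmc : μn * (t - r) = c := by
        have h2 : t - r = μn⁻¹ * c := by rw [ht]; ring
        rw [h2, ← mul_assoc, mul_inv_cancel₀ hμnpos.ne', one_mul]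
      rw [show μ.real (L n) = μn from rfl, hmc, sub_self]
    · intro x
      by_cases hx : x ∈ L n
      · rw [hηin x hx]; exact le_max_left _ _
      · rw [hηout x hx]
        calc ρ₁ x ≤ τ x := le_max_left _ _
          _ = r := hτout x hx
          _ ≤ t := hrt
    · intro x
      by_cases hx : x ∈ L n
      · rw [hηin x hx]; exact le_max_right _ _
      · rw [hηout x hx]
        calc ρ₂ x ≤ τ x := le_max_right _ _
          _ = r := hτout x hx
          _ ≤ t := hrt
    · intro x
      by_cases hx : x ∈ L n
      · rw [hηin x hx]; exact (hτσ x).trans (min_le_left _ _)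
      · rw [hηout x hx]
        calc t ≤ s := hts
          _ = σm x := (hσout x hx).symm
          _ ≤ σ₁ x := min_le_left _ _
    · intro x
      by_cases hx : x ∈ L n
      · rw [hηin x hx]; exact (hτσ x).trans (min_le_right _ _)
      · rw [hηout x hx]
        calc t ≤ s := hts
          _ = σm x := (hσout x hx).symm
          _ ≤ σ₂ x := min_le_right _ _
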